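/- For all real numbers a, b with 0 < b < a < 1 and a ≥ e^{3/2}·b, the binary KL divergence satisfies KL(a‖b) = a·ln(a/b) + (1−a)·ln((1−a)/(1−b)) ≥ a/2; in particular KL(a‖b) ≥ (a−b)/2. -/

import Mathlib

/-- for all reals `0 < b < a < 1` with `a ≥ e^{3/2}·b`, the
binary KL divergence `KL(a‖b) = a·ln(a/b) + (1-a)·ln((1-a)/(1-b))` satisfies
`KL(a‖b) ≥ a/2`; in particular `KL(a‖b) ≥ (a-b)/2`. -/
theorem binary_kl_lower_bound (a b : ℝ) (hb : 0 < b) (hba : b < a) (ha : a < 1)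
    (hab : Real.exp (3 / 2) * b ≤ a) :
    a / 2 ≤ a * Real.log (a / b) + (1 - a) * Real.log ((1 - a) / (1 - b)) ∧
    (a - b) / 2 ≤ a * Real.log (a / b) + (1 - a) * Real.log ((1 - a) / (1 - b)) := by
  have ha0 : 0 < a := hb.trans hba
  have h1a : 0 < 1 - a := by linarith
  have h1b : 0 < 1 - b := by linarith
  -- first term: log(a/b) ≥ 3/2
  have hlog1 : (3 / 2 : ℝ) ≤ Real.log (a / b) := by
    rw [Real.le_log_iff_exp_le (by positivity)]
    rw [le_div_iff₀ hb]
    exact hab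
  -- second term: log((1-a)/(1-b)) ≥ 1 - (1-b)/(1-a)
  have hlog2 : 1 - (1 - b) / (1 - a) ≤ Real.log ((1 - a) / (1 - b)) := by
    have h := Real.log_le_sub_one_of_pos (x := (1 - b) / (1 - a)) (by positivity)
    have hlogeq : Real.log ((1 - a) / (1 - b)) = -Real.log ((1 - b) / (1 - a)) := by
      rw [← Real.log_inv, inv_div]
    linarith
  have key : a / 2 ≤ a * Real.log (a / b) + (1 - a) * Real.log ((1 - a) / (1 - b)) := by
    have h1 : a * (3 / 2) ≤ a * Real.log (a / b) :=
      mul_le_mul_of_nonneg_left hlog1 ha0.le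
    have h2 : (1 - a) * (1 - (1 - b) / (1 - a)) ≤ (1 - a) * Real.log ((1 - a) / (1 - b)) :=
      mul_le_mul_of_nonneg_left hlog2 h1a.le
    have h3 : (1 - a) * (1 - (1 - b) / (1 - a)) = b - a := by
      field_simp
      ring
    nlinarith
  exact ⟨key, by linarith⟩
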